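/- Let (T, M) be a local domain with residue field k and residue map π : T → k, and let D be an integral domain with fraction field k, viewed as a subring of k. Let A := D ×_k T = π⁻¹(D). If P is a prime ideal of A with M ⊆ P, and 𝔭 is the unique prime ideal of D with π⁻¹(𝔭) = P, then the localization A_P (inside the fraction field of T) equals the pullback D_𝔭 ×_k T = π⁻¹(D_𝔭), where D_𝔭 is the localization of D at 𝔭 viewed as a subring of k. -/

import Mathlib

/-- For a local domain `(T, M)` with residue field `k`, residue map `π`, and a subring `D`
of `k` with fraction field `k`, set `A = π⁻¹(D)`. If `P` is a prime of `A` with `M ⊆ P`,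
`𝔭` is the prime of `D` with `π⁻¹(𝔭) = P`, and `E = D_𝔭` is the localization of `D`
at `𝔭` realized as a subring of `k`, then `π⁻¹(E) = D_𝔭 ×_k T`, with the inclusion of
`A`, is the localization of `A` at `P` (i.e. `A_P = D_𝔭 ×_k T`). -/
theorem stmt_5 {T k : Type*} [CommRing T] [IsDomain T] [IsLocalRing T] [Field k]
    (π : T →+* k) (hπ : Function.Surjective π)
    (hker : RingHom.ker π = IsLocalRing.maximalIdeal T)
    (D : Subring k) [IsFractionRing D k]
    (P : Ideal (D.comap π)) [P.IsPrime]
    (hMP : (IsLocalRing.maximalIdeal T).comap (D.comap π).subtype ≤ P)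
    (𝔭 : Ideal D) [𝔭.IsPrime]
    (h𝔭 : 𝔭.comap (π.restrict (D.comap π) D (fun _ hx => hx)) = P)
    (E : Subring k) (hDE : D ≤ E)
    (hE : @IsLocalization D _ 𝔭.primeCompl E _ (Subring.inclusion hDE).toAlgebra) :
    @IsLocalization (D.comap π) _ P.primeCompl (E.comap π) _
      (Subring.inclusion (fun _ hx => hDE hx : D.comap π ≤ E.comap π)).toAlgebra := by
  letI : Algebra D E := (Subring.inclusion hDE).toAlgebra
  letI : Algebra (D.comap π) (E.comap π) :=
    (Subring.inclusion (fun _ hx => hDE hx : D.comap π ≤ E.comap π)).toAlgebra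
  -- membership translation
  have hmem : ∀ a : D.comap π, a ∈ P ↔ (⟨π a.1, a.2⟩ : D) ∈ 𝔭 := by
    intro a
    rw [← h𝔭, Ideal.mem_comap]
    rfl
  -- inverses in E
  have hinvE : ∀ d : D, d ∉ 𝔭 → ((d : k))⁻¹ ∈ E := by
    intro d hd
    obtain ⟨u, hu⟩ := hE.toIsLocalizationMap.map_units ⟨d, hd⟩
    have h1 : ((u.val : E) : k) * ((u.inv : E) : k) = 1 := by
      rw [← Subring.coe_mul, u.val_inv, Subring.coe_one]
    have h2 : ((u.val : E) : k) = (d : k) := by rw [hu]; rfl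
    rw [h2] at h1
    have h3 : ((d : k))⁻¹ = ((u.inv : E) : k) := inv_eq_of_mul_eq_one_right h1
    rw [h3]
    exact (u.inv : E).2
  refine ⟨?_, ?_, ?_⟩
  · rintro ⟨y, hy⟩
    have hd : (⟨π y.1, y.2⟩ : D) ∉ 𝔭 := fun h => hy ((hmem y).mpr h)
    have hne : π y.1 ≠ 0 := by
      intro h
      apply hd
      have : (⟨π y.1, y.2⟩ : D) = 0 := Subtype.ext h
      rw [this]; exact 𝔭.zero_mem
    have hyu : IsUnit y.1 := by
      rw [← IsLocalRing.notMem_maximalIdeal, ← hker]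
      exact fun h => hne h
    obtain ⟨u, hu⟩ := hyu
    have hπinv : π u.inv = (π y.1)⁻¹ := by
      have : π (u.val : T) * π u.inv = 1 := by rw [← map_mul, u.val_inv, map_one]
      rw [hu] at this
      exact eq_inv_of_mul_eq_one_right this
    have hmemE : u.inv ∈ E.comap π := by
      show π u.inv ∈ E
      rw [hπinv]
      exact hinvE _ hd
    refine IsUnit.of_mul_eq_one ⟨u.inv, hmemE⟩ ?_
    apply Subtype.ext
    show y.1 * u.inv = 1
    rw [← hu]; exact u.val_inv
  · rintro ⟨z, hz⟩
    obtain ⟨⟨x, s⟩, hxs⟩ := hE.toIsLocalizationMap.surj ⟨π z, hz⟩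
    have hk : π z * (s.1 : k) = (x : k) := congrArg Subtype.val hxs
    obtain ⟨t, ht⟩ := hπ (s.1 : k)
    have htD : t ∈ D.comap π := by show π t ∈ D; rw [ht]; exact s.1.2
    have htP : (⟨t, htD⟩ : D.comap π) ∉ P := by
      rw [hmem]
      have : (⟨π t, htD⟩ : D) = s.1 := Subtype.ext ht
      rw [this]
      exact s.2
    have hnum : z * t ∈ D.comap π := by
      show π (z * t) ∈ D
      rw [map_mul, ht, hk]
      exact x.2
    refine ⟨⟨⟨z * t, hnum⟩, ⟨⟨t, htD⟩, htP⟩⟩, ?_⟩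
    apply Subtype.ext
    show z * t = z * t
    rfl
  · intro x y h
    refine ⟨1, ?_⟩
    have h' := congrArg Subtype.val h
    have : x = y := Subtype.ext h'
    rw [this]
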